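/- Let g : ℕ₀ⁿ → ℝ with g_𝟎 ≠ 0 and ζ : ℕ₀ⁿ → ℝ be given, and fix arbitrary values a_{𝒌_x,0}, a_{𝒌_x,1} for all 𝒌_x ∈ ℕ₀ⁿ. Then there exists a unique family of coefficients (a_{𝒌_x,k_t})_{𝒌_x∈ℕ₀ⁿ, k_t∈ℕ₀} extending the given values and satisfying, for every (𝒊_x, i_t) ∈ ℕ₀ⁿ × ℕ₀, the recurrence a_{𝒊_x, i_t+2} = −Σ_{𝒋_x < 𝒊_x} (g_{𝒊_x−𝒋_x}/g_𝟎) a_{𝒋_x, i_t+2} + Σ_{l=1}^{n} Σ_{𝒋_x ≤ 𝒊_x+e_l} ((i_{x_l}+1)(j_{x_l}+1) ζ_{𝒊_x+e_l−𝒋_x} / ((i_t+2)(i_t+1) g_𝟎)) a_{𝒋_x+e_l, i_t}. -/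

import Mathlib

private lemma sum_lt_of_erase_Iic {n : ℕ} {ix jx : Fin n → ℕ}
    (h : jx ∈ (Finset.Iic ix).erase ix) : ∑ i, jx i < ∑ i, ix i := by
  rw [Finset.mem_erase, Finset.mem_Iic] at h
  obtain ⟨hne, hle⟩ := h
  obtain ⟨i, hi⟩ := Function.ne_iff.mp hne
  exact Finset.sum_lt_sum (fun i _ => hle i)
    ⟨i, Finset.mem_univ i, lt_of_le_of_ne (hle i) hi⟩

noncomputable def recA (n : ℕ) (g ζ : (Fin n → ℕ) → ℝ)
    (a0 a1 : (Fin n → ℕ) → ℝ) : (Fin n → ℕ) → ℕ → ℝ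
  | kx, 0 => a0 kx
  | kx, 1 => a1 kx
  | ix, it + 2 =>
      -(∑ jx ∈ ((Finset.Iic ix).erase ix).attach,
          g (ix - jx.1) / g 0 * recA n g ζ a0 a1 jx.1 (it + 2))
      + ∑ l : Fin n, ∑ jx ∈ Finset.Iic (ix + Pi.single l 1),
          ((ix l + 1) * (jx l + 1) : ℝ) * ζ (ix + Pi.single l 1 - jx) /
              (((it : ℝ) + 2) * ((it : ℝ) + 1) * g 0) *
            recA n g ζ a0 a1 (jx + Pi.single l 1) it
termination_by kx kt => (kt, ∑ i, kx i)
decreasing_by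
  · exact Prod.Lex.right _ (sum_lt_of_erase_Iic jx.2)
  · exact Prod.Lex.left _ _ (by omega)

theorem quasiTrefftz_basis_recurrence_wellDefined (n : ℕ)
    (g ζ : (Fin n → ℕ) → ℝ) (hg : g 0 ≠ 0) (a0 a1 : (Fin n → ℕ) → ℝ) :
    ∃! a : (Fin n → ℕ) → ℕ → ℝ,
      (∀ kx, a kx 0 = a0 kx) ∧ (∀ kx, a kx 1 = a1 kx) ∧
      ∀ (ix : Fin n → ℕ) (it : ℕ),
        a ix (it + 2) =
          -(∑ jx ∈ (Finset.Iic ix).erase ix, g (ix - jx) / g 0 * a jx (it + 2))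
          + ∑ l : Fin n, ∑ jx ∈ Finset.Iic (ix + Pi.single l 1),
              ((ix l + 1) * (jx l + 1) : ℝ) * ζ (ix + Pi.single l 1 - jx) /
                  (((it : ℝ) + 2) * ((it : ℝ) + 1) * g 0) *
                a (jx + Pi.single l 1) it := by
  refine ⟨recA n g ζ a0 a1, ⟨fun kx => by rw [recA], fun kx => by rw [recA],
      fun ix it => ?_⟩, ?_⟩
  · rw [recA]
    congr 1
    congr 1
    exact Finset.sum_attach _
      (fun jx => g (ix - jx) / g 0 * recA n g ζ a0 a1 jx (it + 2))
  · rintro b ⟨hb0, hb1, hbr⟩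
    funext kx kt
    induction kt using Nat.strong_induction_on generalizing kx with
    | _ kt ih =>
      match kt with
      | 0 => rw [hb0, recA]
      | 1 => rw [hb1, recA]
      | it + 2 =>
        have inner : ∀ N (kx : Fin n → ℕ), (∑ i, kx i) = N →
            b kx (it + 2) = recA n g ζ a0 a1 kx (it + 2) := by
          intro N
          induction N using Nat.strong_induction_on with
          | _ N ihN =>
            intro kx hN
            subst hN
            rw [hbr kx it, recA]
            congr 1
            · congr 1
              rw [← Finset.sum_attach ((Finset.Iic kx).erase kx)
                (fun jx => g (kx - jx) / g 0 * b jx (it + 2))]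
              refine Finset.sum_congr rfl fun jx _ => ?_
              rw [ihN _ (sum_lt_of_erase_Iic jx.2) jx.1 rfl]
            · refine Finset.sum_congr rfl fun l _ => Finset.sum_congr rfl fun jx _ => ?_
              rw [ih it (by omega)]
        exact inner _ kx rfl
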